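/- In a divided power system over a commutative ring, i.e., elements A_m (m ≥ 0, A_0 = 1) with A_k·A_m = C(k+m, k)·A_{k+m}, the elements defined by A_{q·j + r} := ((q!)^j · r! / (qj+r)!) · (A_q)^j · A_r for 0 ≤ r < q reproduce the divided power relations, provided the displayed rational coefficients lie in the ring: specifically, over F_p with q = p^e, if A_m for m < q satisfy divided-power relations with (A_{p^f})^p = 0 for f < e, then the A_m so defined satisfy A_{m₁}A_{m₂} = C(m₁+m₂, m₁) A_{m₁+m₂} whenever m₁+m₂ < p·q. -/

import Mathlib

lemma aux17_dvd (q j r : ℕ) : q.factorial ^ j * r.factorial ∣ (q * j + r).factorial := by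
  induction j with
  | zero => simpa using dvd_refl r.factorial
  | succ j ih =>
    have h2 : (q * j + r).factorial * q.factorial ∣ (q * j + r + q).factorial :=
      Nat.factorial_mul_factorial_dvd_factorial_add _ _
    calc q.factorial ^ (j + 1) * r.factorial
        = q.factorial ^ j * r.factorial * q.factorial := by ring
      _ ∣ (q * j + r).factorial * q.factorial := mul_dvd_mul_right ih _
      _ ∣ (q * j + r + q).factorial := h2
      _ = (q * (j + 1) + r).factorial := by ring_nf

lemma aux17_key (q m : ℕ) :
    m.factorial / (q.factorial ^ (m / q) * (m % q).factorial) *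
      (q.factorial ^ (m / q) * (m % q).factorial) = m.factorial := by
  apply Nat.div_mul_cancel
  have h := aux17_dvd q (m / q) (m % q)
  rwa [Nat.div_add_mod] at h

lemma aux17_val (p : ℕ) [Fact p.Prime] (e q m : ℕ) (hq : q = p ^ e) (hm : m < p * q) :
    padicValNat p m.factorial =
      (m / q) * padicValNat p q.factorial + padicValNat p (m % q).factorial := by
  have hp : p.Prime := Fact.out
  have hp1 : 1 < p := hp.one_lt
  have hq0 : 0 < q := hq ▸ pow_pos hp.pos e
  have hmq : m % q < q := Nat.mod_lt _ hq0
  have hmlt : m < p ^ (e + 1) := by rw [pow_succ', ← hq]; exact hm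
  have hlog : ∀ n : ℕ, n < p ^ (e + 1) → Nat.log p n < e + 2 := by
    intro n hn
    have h1 : Nat.log p n ≤ Nat.log p (p ^ (e + 1)) :=
      Nat.log_mono_right (le_of_lt hn)
    rw [Nat.log_pow hp1] at h1; omega
  have hqlt : q < p ^ (e + 1) := by rw [hq]; exact Nat.pow_lt_pow_succ hp1
  have hv1 := padicValNat_factorial (p := p) (n := m) (b := e + 2) (hlog m hmlt)
  have hv2 := padicValNat_factorial (p := p) (n := q) (b := e + 2) (hlog q hqlt)
  have hv3 := padicValNat_factorial (p := p) (n := m % q) (b := e + 2)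
    (hlog (m % q) (lt_trans hmq hqlt))
  rw [hv1, hv2, hv3, Finset.mul_sum, ← Finset.sum_add_distrib]
  apply Finset.sum_congr rfl
  intro i hi
  simp only [Finset.mem_Ico] at hi
  rcases le_or_gt i e with hie | hie
  · -- i ≤ e : p^i divides q
    have hqi : q = p ^ i * p ^ (e - i) := by rw [hq, ← pow_add]; congr 1; omega
    have hdm := Nat.div_add_mod m q
    have h1 : m = p ^ i * (p ^ (e - i) * (m / q)) + m % q := by
      rw [← mul_assoc, ← hqi]; omega
    have h2 : m / p ^ i = p ^ (e - i) * (m / q) + m % q / p ^ i := by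
      conv_lhs => rw [h1]
      rw [Nat.mul_add_div (pow_pos hp.pos i)]
    have h3 : q / p ^ i = p ^ (e - i) := by
      rw [hqi, Nat.mul_div_cancel_left _ (pow_pos hp.pos i)]
    rw [h2, h3]; ring
  · -- i > e : everything is 0
    have hpe : p ^ (e + 1) ≤ p ^ i := Nat.pow_le_pow_right hp.pos hie
    have h1 : m / p ^ i = 0 := Nat.div_eq_of_lt (lt_of_lt_of_le hmlt hpe)
    have h2 : q / p ^ i = 0 := Nat.div_eq_of_lt (lt_of_lt_of_le hqlt hpe)
    have h3 : m % q / p ^ i = 0 :=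
      Nat.div_eq_of_lt (lt_of_lt_of_le (lt_trans hmq hqlt) hpe)
    rw [h1, h2, h3, mul_zero, add_zero]

lemma aux17_unit (p : ℕ) [Fact p.Prime] (e q m : ℕ) (hq : q = p ^ e) (hm : m < p * q) :
    ¬ p ∣ m.factorial / (q.factorial ^ (m / q) * (m % q).factorial) := by
  have hp : p.Prime := Fact.out
  have hkey := aux17_key q m
  set c := m.factorial / (q.factorial ^ (m / q) * (m % q).factorial) with hc
  have hD : q.factorial ^ (m / q) * (m % q).factorial ≠ 0 :=
    Nat.mul_ne_zero (pow_ne_zero _ (Nat.factorial_ne_zero q)) (Nat.factorial_ne_zero _)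
  have hc0 : c ≠ 0 := by
    intro h; rw [h, zero_mul] at hkey; exact (Nat.factorial_ne_zero m) hkey.symm
  have hvmul : padicValNat p c + padicValNat p (q.factorial ^ (m / q) * (m % q).factorial)
      = padicValNat p m.factorial := by
    rw [← padicValNat.mul hc0 hD, hkey]
  have hvD : padicValNat p (q.factorial ^ (m / q) * (m % q).factorial)
      = (m / q) * padicValNat p q.factorial + padicValNat p (m % q).factorial := by
    rw [padicValNat.mul (pow_ne_zero _ (Nat.factorial_ne_zero q)) (Nat.factorial_ne_zero _),
      padicValNat.pow]
  have hveq := aux17_val p e q m hq hm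
  have hvc : padicValNat p c = 0 := by omega
  rcases padicValNat.eq_zero_iff.mp hvc with h | h | h
  · exact absurd h hp.one_lt.ne'
  · exact absurd h hc0
  · exact h

lemma aux17_nat_id (q : ℕ) (hq0 : 0 < q) (m₁ m₂ : ℕ) (hr : m₁ % q + m₂ % q < q) :
    (m₁ + m₂).factorial /
        (q.factorial ^ ((m₁ + m₂) / q) * ((m₁ + m₂) % q).factorial) *
      (m₁ % q + m₂ % q).choose (m₁ % q) =
    (m₁ + m₂).choose m₁ *
      ((m₁.factorial / (q.factorial ^ (m₁ / q) * (m₁ % q).factorial)) *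
       (m₂.factorial / (q.factorial ^ (m₂ / q) * (m₂ % q).factorial))) := by
  have hd1 := Nat.div_add_mod m₁ q
  have hd2 := Nat.div_add_mod m₂ q
  have hsum : m₁ + m₂ = q * (m₁ / q + m₂ / q) + (m₁ % q + m₂ % q) := by
    rw [Nat.mul_add]; omega
  have hdiv : (m₁ + m₂) / q = m₁ / q + m₂ / q := by
    rw [hsum, Nat.mul_add_div hq0, Nat.div_eq_of_lt hr, add_zero]
  have hmod : (m₁ + m₂) % q = m₁ % q + m₂ % q := by
    rw [hsum, Nat.mul_add_mod, Nat.mod_eq_of_lt hr]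
  have k1 := aux17_key q m₁
  have k2 := aux17_key q m₂
  have kM := aux17_key q (m₁ + m₂)
  rw [hdiv, hmod] at kM
  rw [hdiv, hmod]
  set c₁ := m₁.factorial / (q.factorial ^ (m₁ / q) * (m₁ % q).factorial) with hc1
  set c₂ := m₂.factorial / (q.factorial ^ (m₂ / q) * (m₂ % q).factorial) with hc2
  set cM := (m₁ + m₂).factorial /
      (q.factorial ^ (m₁ / q + m₂ / q) * (m₁ % q + m₂ % q).factorial) with hcM
  have hch1 : (m₁ % q + m₂ % q).choose (m₁ % q) * (m₁ % q).factorial * (m₂ % q).factorial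
      = (m₁ % q + m₂ % q).factorial := by
    have := Nat.choose_mul_factorial_mul_factorial
      (show m₁ % q ≤ m₁ % q + m₂ % q from Nat.le_add_right _ _)
    simpa using this
  have hch2 : (m₁ + m₂).choose m₁ * m₁.factorial * m₂.factorial = (m₁ + m₂).factorial := by
    have := Nat.choose_mul_factorial_mul_factorial
      (show m₁ ≤ m₁ + m₂ from Nat.le_add_right _ _)
    simpa using this
  set X := q.factorial ^ (m₁ / q + m₂ / q) * (m₁ % q + m₂ % q).factorial *
    ((m₁ % q).factorial * (m₂ % q).factorial) with hX
  have hX0 : 0 < X := by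
    positivity
  apply Nat.eq_of_mul_eq_mul_right hX0
  calc cM * (m₁ % q + m₂ % q).choose (m₁ % q) * X
      = (cM * (q.factorial ^ (m₁ / q + m₂ / q) * (m₁ % q + m₂ % q).factorial)) *
        ((m₁ % q + m₂ % q).choose (m₁ % q) * (m₁ % q).factorial * (m₂ % q).factorial) := by
        rw [hX]; ring
    _ = (m₁ + m₂).factorial * (m₁ % q + m₂ % q).factorial := by rw [kM, hch1]
    _ = ((m₁ + m₂).choose m₁ * m₁.factorial * m₂.factorial) *
        (m₁ % q + m₂ % q).factorial := by rw [hch2]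
    _ = ((m₁ + m₂).choose m₁ *
          ((c₁ * (q.factorial ^ (m₁ / q) * (m₁ % q).factorial)) *
           (c₂ * (q.factorial ^ (m₂ / q) * (m₂ % q).factorial)))) *
        (m₁ % q + m₂ % q).factorial := by rw [k1, k2]; ring
    _ = (m₁ + m₂).choose m₁ * (c₁ * c₂) * X := by rw [hX, pow_add]; ring

/-- Extending a system of divided powers: over an `F_p`-algebra, given divided powers
`A'_m` for `m < q = p^e` (with `A'_k A'_m = 0` for `k + m ≥ q` and `(A'_{p^f})^p = 0`),
and a new element `Aq`, the elements
`B_{qj+r} = ((q!)^j r!/(qj+r)!) · Aq^j · A'_r` satisfy the divided power relations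
`B_{m₁} B_{m₂} = C(m₁+m₂, m₁) B_{m₁+m₂}` for `m₁ + m₂ < p·q`. -/
theorem stmt_17 (p : ℕ) [Fact p.Prime] {A : Type*} [CommRing A] [Algebra (ZMod p) A]
    (e q : ℕ) (hq : q = p ^ e)
    (A' : ℕ → A) (hA0 : A' 0 = 1)
    (hrel : ∀ k m : ℕ, k + m < q →
      A' k * A' m = ((Nat.choose (k + m) k : ZMod p)) • A' (k + m))
    (hrel0 : ∀ k m : ℕ, k < q → m < q → q ≤ k + m → A' k * A' m = 0)
    (hpow : ∀ f : ℕ, f < e → (A' (p ^ f)) ^ p = 0)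
    (Aq : A) (B : ℕ → A)
    (hB : ∀ m : ℕ, B m =
      (((Nat.factorial m /
          (Nat.factorial q ^ (m / q) * Nat.factorial (m % q)) : ℕ) : ZMod p))⁻¹ •
        (Aq ^ (m / q) * A' (m % q))) :
    ∀ m₁ m₂ : ℕ, m₁ + m₂ < p * q →
      B m₁ * B m₂ = ((Nat.choose (m₁ + m₂) m₁ : ZMod p)) • B (m₁ + m₂) := by
  intro m₁ m₂ hlt
  have hp : p.Prime := Fact.out
  have hp1 : 1 < p := hp.one_lt
  have hq0 : 0 < q := hq ▸ pow_pos hp.pos e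
  have hd1 := Nat.div_add_mod m₁ q
  have hd2 := Nat.div_add_mod m₂ q
  have hm1q : m₁ % q < q := Nat.mod_lt _ hq0
  have hm2q : m₂ % q < q := Nat.mod_lt _ hq0
  -- unit facts
  have hu1 : ((m₁.factorial / (q.factorial ^ (m₁ / q) * (m₁ % q).factorial) : ℕ) : ZMod p) ≠ 0 := by
    rw [Ne, ZMod.natCast_eq_zero_iff]
    exact aux17_unit p e q m₁ hq (by omega)
  have hu2 : ((m₂.factorial / (q.factorial ^ (m₂ / q) * (m₂ % q).factorial) : ℕ) : ZMod p) ≠ 0 := by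
    rw [Ne, ZMod.natCast_eq_zero_iff]
    exact aux17_unit p e q m₂ hq (by omega)
  rw [hB m₁, hB m₂, hB (m₁ + m₂)]
  rw [smul_mul_smul_comm]
  by_cases hr : m₁ % q + m₂ % q < q
  · -- no carry case
    have huM : (((m₁ + m₂).factorial /
        (q.factorial ^ ((m₁ + m₂) / q) * ((m₁ + m₂) % q).factorial) : ℕ) : ZMod p) ≠ 0 := by
      rw [Ne, ZMod.natCast_eq_zero_iff]
      exact aux17_unit p e q (m₁ + m₂) hq hlt
    have hsum : m₁ + m₂ = q * (m₁ / q + m₂ / q) + (m₁ % q + m₂ % q) := by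
      rw [Nat.mul_add]; omega
    have hdiv : (m₁ + m₂) / q = m₁ / q + m₂ / q := by
      rw [hsum, Nat.mul_add_div hq0, Nat.div_eq_of_lt hr, add_zero]
    have hmod : (m₁ + m₂) % q = m₁ % q + m₂ % q := by
      rw [hsum, Nat.mul_add_mod, Nat.mod_eq_of_lt hr]
    have hm : Aq ^ (m₁ / q) * A' (m₁ % q) * (Aq ^ (m₂ / q) * A' (m₂ % q))
        = ((Nat.choose (m₁ % q + m₂ % q) (m₁ % q) : ZMod p)) •
          (Aq ^ ((m₁ + m₂) / q) * A' ((m₁ + m₂) % q)) := by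
      rw [mul_mul_mul_comm, ← pow_add, hrel _ _ hr, hdiv, hmod, mul_smul_comm]
    rw [hm, smul_smul, smul_smul]
    congr 1
    -- scalar identity in ZMod p
    have hnat := aux17_nat_id q hq0 m₁ m₂ hr
    have hcast : (((m₁ + m₂).factorial /
          (q.factorial ^ ((m₁ + m₂) / q) * ((m₁ + m₂) % q).factorial) : ℕ) : ZMod p) *
        ((Nat.choose (m₁ % q + m₂ % q) (m₁ % q) : ℕ) : ZMod p) =
        (((m₁ + m₂).choose m₁ : ℕ) : ZMod p) *
        (((m₁.factorial / (q.factorial ^ (m₁ / q) * (m₁ % q).factorial) : ℕ) : ZMod p) *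
         ((m₂.factorial / (q.factorial ^ (m₂ / q) * (m₂ % q).factorial) : ℕ) : ZMod p)) := by
      exact_mod_cast congrArg (Nat.cast : ℕ → ZMod p) hnat
    field_simp
    linear_combination hcast
  · -- carry case: both sides vanish
    push_neg at hr
    have hz : Aq ^ (m₁ / q) * A' (m₁ % q) * (Aq ^ (m₂ / q) * A' (m₂ % q)) = 0 := by
      rw [mul_mul_mul_comm, ← pow_add, hrel0 _ _ hm1q hm2q hr, mul_zero]
    rw [hz, smul_zero]
    have he1 : 1 ≤ e := by
      by_contra h
      have : e = 0 := by omega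
      rw [this, pow_zero] at hq
      omega
    have hdvd : p ∣ (m₁ + m₂).choose m₁ := by
      have hM0 : 0 < m₁ + m₂ := by omega
      have hlog : Nat.log p (m₁ + m₂) < e + 2 := by
        have hM' : m₁ + m₂ < p ^ (e + 1) := by rw [pow_succ', ← hq]; exact hlt
        have h1 : Nat.log p (m₁ + m₂) ≤ Nat.log p (p ^ (e + 1)) :=
          Nat.log_mono_right (le_of_lt hM')
        rw [Nat.log_pow hp1] at h1; omega
      have hv := padicValNat_choose (p := p) (k := m₁) (n := m₁ + m₂) (b := e + 2)
        (Nat.le_add_right _ _) hlog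
      have hmem : e ∈ (Finset.Ico 1 (e + 2)).filter
          fun i => p ^ i ≤ m₁ % p ^ i + (m₁ + m₂ - m₁) % p ^ i := by
        simp only [Finset.mem_filter, Finset.mem_Ico]
        refine ⟨⟨he1, by omega⟩, ?_⟩
        have : m₁ + m₂ - m₁ = m₂ := by omega
        rw [this, ← hq]
        exact hr
      have hpos : 1 ≤ padicValNat p ((m₁ + m₂).choose m₁) := by
        rw [hv]
        exact Finset.card_pos.mpr ⟨e, hmem⟩
      calc p = p ^ 1 := (pow_one p).symm
        _ ∣ p ^ padicValNat p ((m₁ + m₂).choose m₁) := pow_dvd_pow p hpos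
        _ ∣ (m₁ + m₂).choose m₁ := pow_padicValNat_dvd
    have : ((Nat.choose (m₁ + m₂) m₁ : ℕ) : ZMod p) = 0 := by
      rw [ZMod.natCast_eq_zero_iff]; exact hdvd
    rw [this, zero_smul]
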